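/- Let p ∈ (0,1), n ≥ 2, and let x₀, x₁, ..., x_{n-1} be i.i.d. random variables with the geometric(p) distribution P(x = i) = p(1-p)^{i-1} for integers i ≥ 1. Define the perimeter P_n := 2n + x₀ + x_{n-1} + Σ_{i=1}^{n-1} |x_i - x_{i-1}|. Then E(P_n) = (2 + (2 + 2p - 2p²)·n) / (p(2 - p)). -/

import Mathlib

open MeasureTheory ProbabilityTheory
open scoped ENNReal

/-- The geometric(p) probability measure on `ℕ`: it assigns mass `p * (1 - p)^(i - 1)`
to each integer `i ≥ 1`. -/
noncomputable def geomMeasure (p : ℝ) : Measure ℕ :=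
  Measure.sum (fun i : ℕ => (ENNReal.ofReal (p * (1 - p) ^ i)) • Measure.dirac (i + 1))

variable {p : ℝ}

-- real sums
lemma rsum0 (hp0 : 0 < p) (hp1 : p < 1) : ∑' k : ℕ, p * (1-p)^k = 1 := by
  rw [tsum_mul_left, tsum_geometric_of_lt_one (by linarith) (by linarith)]
  rw [sub_sub_cancel]; field_simp

lemma rsummable0 (hp0 : 0 < p) (hp1 : p < 1) : Summable (fun k : ℕ => p * (1-p)^k) :=
  (summable_geometric_of_lt_one (by linarith) (by linarith)).mul_left p

lemma rsummable1 (hp0 : 0 < p) (hp1 : p < 1) :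
    Summable (fun k : ℕ => p * (1-p)^k * k) := by
  have h : Summable (fun k : ℕ => (k:ℝ) * (1-p)^k) := by
    have := summable_pow_mul_geometric_of_norm_lt_one (R := ℝ) 1 (r := 1-p)
      (by rw [Real.norm_eq_abs]; rw [abs_lt]; constructor <;> linarith)
    simpa using this
  have := h.mul_left p
  refine this.congr fun k => ?_
  ring

lemma rsum1 (hp0 : 0 < p) (hp1 : p < 1) : ∑' k : ℕ, p * (1-p)^k * (k:ℝ) = (1-p)/p := by
  have h : ∑' k : ℕ, (k:ℝ) * (1-p)^k = (1-p) / (1 - (1-p))^2 :=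
    tsum_coe_mul_geometric_of_norm_lt_one
      (by rw [Real.norm_eq_abs, abs_lt]; constructor <;> linarith)
  calc ∑' k : ℕ, p * (1-p)^k * (k:ℝ) = ∑' k : ℕ, p * ((k:ℝ) * (1-p)^k) := by
        congr 1; funext k; ring
    _ = p * ((1-p) / (1 - (1-p))^2) := by rw [tsum_mul_left, h]
    _ = (1-p)/p := by rw [sub_sub_cancel]; field_simp <;> ring

noncomputable def W (p : ℝ) (k : ℕ) : ℝ≥0∞ := ENNReal.ofReal (p*(1-p)^k)

section
variable (hp0 : 0 < p) (hp1 : p < 1)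
include hp0 hp1

lemma hW (k : ℕ) : 0 ≤ p * (1-p)^k := mul_nonneg hp0.le (pow_nonneg (by linarith) k)

lemma E0 : ∑' k : ℕ, W p k = 1 := by
  simp only [W]
  rw [← ENNReal.ofReal_tsum_of_nonneg (hW hp0 hp1) (rsummable0 hp0 hp1),
    rsum0 hp0 hp1, ENNReal.ofReal_one]

lemma E1 : ∑' k : ℕ, W p k * (k : ℝ≥0∞) = ENNReal.ofReal ((1-p)/p) := by
  have h : ∀ k : ℕ, W p k * (k : ℝ≥0∞) = ENNReal.ofReal (p*(1-p)^k * k) := by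
    intro k
    rw [ENNReal.ofReal_mul (hW hp0 hp1 k), ENNReal.ofReal_natCast]; rfl
  simp_rw [h]
  rw [← ENNReal.ofReal_tsum_of_nonneg
    (fun k => mul_nonneg (hW hp0 hp1 k) (Nat.cast_nonneg k)) (rsummable1 hp0 hp1),
    rsum1 hp0 hp1]

lemma rsummable2 (m : ℕ) : Summable (fun i : ℕ => if m < i then p * (1-p)^i else 0) := by
  apply (rsummable0 hp0 hp1).of_nonneg_of_le
  · intro i; split
    · exact hW hp0 hp1 i
    · exact le_rfl
  · intro i; split
    · exact le_rfl
    · exact hW hp0 hp1 i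

lemma rsum2 (m : ℕ) :
    ∑' i : ℕ, (if m < i then p * (1-p)^i else 0) = (1-p)^(m+1) := by
  rw [(Summable.sum_add_tsum_nat_add (m+1) (rsummable2 hp0 hp1 m)).symm]
  have h1 : ∑ i ∈ Finset.range (m+1), (if m < i then p * (1-p)^i else 0) = 0 := by
    apply Finset.sum_eq_zero
    intro i hi
    rw [Finset.mem_range] at hi
    rw [if_neg (by omega)]
  have h2 : ∀ i : ℕ, (if m < i + (m+1) then p * (1-p)^(i+(m+1)) else 0)
      = p * (1-p)^(m+1) * (1-p)^i := by
    intro i; rw [if_pos (by omega)]; ring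
  rw [h1, zero_add]
  calc ∑' i : ℕ, (if m < i + (m+1) then p * (1-p)^(i+(m+1)) else 0)
      = ∑' i : ℕ, p * (1-p)^(m+1) * (1-p)^i := by congr 1; funext i; exact h2 i
    _ = (1-p)^(m+1) := by
        rw [tsum_mul_left, tsum_geometric_of_lt_one (by linarith) (by linarith)]
        rw [sub_sub_cancel]; field_simp

lemma E2 (m : ℕ) :
    ∑' i : ℕ, W p i * (if m < i then (1:ℝ≥0∞) else 0) = ENNReal.ofReal ((1-p)^(m+1)) := by
  have h : ∀ i : ℕ, W p i * (if m < i then (1:ℝ≥0∞) else 0)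
      = ENNReal.ofReal (if m < i then p * (1-p)^i else 0) := by
    intro i; split <;> simp [W]
  simp_rw [h]
  rw [← ENNReal.ofReal_tsum_of_nonneg (fun i => by split; exacts [hW hp0 hp1 i, le_rfl])
    (rsummable2 hp0 hp1 m), rsum2 hp0 hp1 m]

lemma E3 :
    ∑' m : ℕ, ENNReal.ofReal ((1-p)^(m+1)) * ENNReal.ofReal ((1-p)^(m+1))
      = ENNReal.ofReal ((1-p)^2/(1-(1-p)^2)) := by
  have h : ∀ m : ℕ, ENNReal.ofReal ((1-p)^(m+1)) * ENNReal.ofReal ((1-p)^(m+1))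
      = ENNReal.ofReal ((1-p)^2 * ((1-p)^2)^m) := by
    intro m
    rw [← ENNReal.ofReal_mul (pow_nonneg (by linarith) _)]
    congr 1
    rw [← pow_add, ← pow_mul, ← pow_add]
    congr 1
    omega
  simp_rw [h]
  have hlt : (1-p)^2 < 1 := by nlinarith
  have hq2 : (0:ℝ) ≤ (1-p)^2 := sq_nonneg _
  rw [← ENNReal.ofReal_tsum_of_nonneg (fun m => mul_nonneg hq2 (pow_nonneg hq2 m))
    ((summable_geometric_of_lt_one hq2 hlt).mul_left _),
    tsum_mul_left, tsum_geometric_of_lt_one hq2 hlt, div_eq_mul_inv]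

end

lemma minCast (i j : ℕ) : ((min i j : ℕ) : ℝ≥0∞)
    = ∑' k : ℕ, (if k < i then (1:ℝ≥0∞) else 0) * (if k < j then 1 else 0) := by
  have h : ∀ k : ℕ, (if k < i then (1:ℝ≥0∞) else 0) * (if k < j then 1 else 0)
      = if k < min i j then 1 else 0 := by
    intro k
    rcases lt_or_ge k i with h1 | h1 <;> rcases lt_or_ge k j with h2 | h2 <;>
      simp [h1, h2, lt_min_iff, Nat.not_lt.mpr, *]
  simp_rw [h]
  rw [tsum_eq_sum (s := Finset.range (min i j))
    (fun k hk => by rw [if_neg (by simpa [Finset.mem_range] using hk)])]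
  rw [Finset.sum_congr rfl (fun k hk => if_pos (Finset.mem_range.mp hk))]
  simp

section
variable (hp0 : 0 < p) (hp1 : p < 1)
include hp0 hp1

lemma EA : ∑' i : ℕ, ∑' j : ℕ, W p i * (W p j * ((i:ℝ≥0∞)+(j:ℝ≥0∞)))
    = ENNReal.ofReal (2*(1-p)/p) := by
  have hinner : ∀ i : ℕ, ∑' j : ℕ, W p i * (W p j * ((i:ℝ≥0∞)+(j:ℝ≥0∞)))
      = W p i * ((i:ℝ≥0∞) + ENNReal.ofReal ((1-p)/p)) := by
    intro i
    rw [ENNReal.tsum_mul_left]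
    congr 1
    have : ∀ j : ℕ, W p j * ((i:ℝ≥0∞)+(j:ℝ≥0∞)) = W p j * (i:ℝ≥0∞) + W p j * (j:ℝ≥0∞) :=
      fun j => mul_add _ _ _
    simp_rw [this]
    rw [ENNReal.tsum_add, ENNReal.tsum_mul_right, E0 hp0 hp1, E1 hp0 hp1, one_mul]
  simp_rw [hinner, mul_add]
  rw [ENNReal.tsum_add, ENNReal.tsum_mul_right, E0 hp0 hp1, E1 hp0 hp1, one_mul,
    ← ENNReal.ofReal_add (div_nonneg (by linarith) hp0.le) (div_nonneg (by linarith) hp0.le)]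
  congr 1
  ring

lemma EB : ∑' i : ℕ, ∑' j : ℕ, W p i * (W p j * ((min i j : ℕ) : ℝ≥0∞))
    = ENNReal.ofReal ((1-p)^2/(1-(1-p)^2)) := by
  simp_rw [minCast]
  have h1 : ∀ i j : ℕ, W p i * (W p j *
      ∑' k : ℕ, (if k < i then (1:ℝ≥0∞) else 0) * (if k < j then 1 else 0))
      = ∑' k : ℕ, (W p i * (if k < i then (1:ℝ≥0∞) else 0))
          * (W p j * (if k < j then 1 else 0)) := by
    intro i j
    rw [← ENNReal.tsum_mul_left, ← ENNReal.tsum_mul_left]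
    congr 1; funext k; ring
  simp_rw [h1]
  have h2 : ∀ i : ℕ, ∑' j : ℕ, ∑' k : ℕ, (W p i * (if k < i then (1:ℝ≥0∞) else 0))
      * (W p j * (if k < j then 1 else 0))
      = ∑' k : ℕ, (W p i * (if k < i then (1:ℝ≥0∞) else 0)) * ENNReal.ofReal ((1-p)^(k+1)) := by
    intro i
    rw [ENNReal.tsum_comm]
    congr 1; funext k
    rw [ENNReal.tsum_mul_left, E2 hp0 hp1 k]
  simp_rw [h2]
  rw [ENNReal.tsum_comm]
  calc ∑' k : ℕ, ∑' i : ℕ, (W p i * (if k < i then (1:ℝ≥0∞) else 0)) * ENNReal.ofReal ((1-p)^(k+1))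
      = ∑' k : ℕ, ENNReal.ofReal ((1-p)^(k+1)) * ENNReal.ofReal ((1-p)^(k+1)) := by
        congr 1; funext k
        rw [ENNReal.tsum_mul_right, E2 hp0 hp1 k]
    _ = ENNReal.ofReal ((1-p)^2/(1-(1-p)^2)) := E3 hp0 hp1

lemma ED : ∑' i : ℕ, ∑' j : ℕ, W p i * (W p j * ENNReal.ofReal |(i:ℝ)-(j:ℝ)|)
    = ENNReal.ofReal (2*(1-p)/(p*(2-p))) := by
  have key : ∀ i j : ℕ, ENNReal.ofReal |(i:ℝ)-(j:ℝ)| + 2 * ((min i j : ℕ) : ℝ≥0∞)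
      = (i:ℝ≥0∞) + (j:ℝ≥0∞) := by
    intro i j
    rw [← ENNReal.ofReal_natCast (min i j), ← ENNReal.ofReal_natCast i,
      ← ENNReal.ofReal_natCast j, show ((2:ℝ≥0∞)) = ENNReal.ofReal 2 by norm_num,
      ← ENNReal.ofReal_mul (by norm_num),
      ← ENNReal.ofReal_add (abs_nonneg _) (by positivity),
      ← ENNReal.ofReal_add (Nat.cast_nonneg i) (Nat.cast_nonneg j)]
    congr 1
    rw [Nat.cast_min]
    rcases le_total (i:ℝ) (j:ℝ) with h | h
    · rw [abs_of_nonpos (by linarith), min_eq_left h]; ring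
    · rw [abs_of_nonneg (by linarith), min_eq_right h]; ring
  have hptwise : ∀ i j : ℕ,
      W p i * (W p j * ENNReal.ofReal |(i:ℝ)-(j:ℝ)|)
        + 2 * (W p i * (W p j * ((min i j : ℕ) : ℝ≥0∞)))
      = W p i * (W p j * ((i:ℝ≥0∞)+(j:ℝ≥0∞))) := by
    intro i j
    rw [← key i j]
    ring
  have hsum : (∑' i : ℕ, ∑' j : ℕ, W p i * (W p j * ENNReal.ofReal |(i:ℝ)-(j:ℝ)|))
      + 2 * (∑' i : ℕ, ∑' j : ℕ, W p i * (W p j * ((min i j : ℕ) : ℝ≥0∞)))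
      = ENNReal.ofReal (2*(1-p)/p) := by
    rw [← EA hp0 hp1, ← ENNReal.tsum_mul_left, ← ENNReal.tsum_add]
    congr 1; funext i
    rw [← ENNReal.tsum_mul_left, ← ENNReal.tsum_add]
    congr 1; funext j
    exact hptwise i j
  rw [EB hp0 hp1] at hsum
  have hfin : (2:ℝ≥0∞) * ENNReal.ofReal ((1-p)^2/(1-(1-p)^2)) ≠ ∞ :=
    ENNReal.mul_ne_top (by norm_num) ENNReal.ofReal_ne_top
  have hd : (0:ℝ) < p*(2-p) := by nlinarith
  have h1 : 1 - (1-p)^2 = p*(2-p) := by ring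
  have hA : (0:ℝ) ≤ 2*(1-p)/(p*(2-p)) := div_nonneg (by linarith) hd.le
  have hB : (0:ℝ) ≤ 2 * ((1-p)^2/(1-(1-p)^2)) := by
    rw [h1]; exact mul_nonneg (by norm_num) (div_nonneg (sq_nonneg _) hd.le)
  have harith : ENNReal.ofReal (2*(1-p)/(p*(2-p)))
      + 2 * ENNReal.ofReal ((1-p)^2/(1-(1-p)^2)) = ENNReal.ofReal (2*(1-p)/p) := by
    rw [show ((2:ℝ≥0∞)) = ENNReal.ofReal 2 by norm_num, ← ENNReal.ofReal_mul (by norm_num),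
      ← ENNReal.ofReal_add hA hB]
    congr 1
    rw [h1]
    have h2p : (2:ℝ) - p ≠ 0 := (by linarith : (0:ℝ) < 2 - p).ne'
    field_simp
    ring
  rw [← harith] at hsum
  exact (ENNReal.add_left_inj hfin).mp hsum

end

open MeasureTheory ProbabilityTheory

lemma lintegral_geom (p : ℝ) (f : ℕ → ℝ≥0∞) :
    ∫⁻ a, f a ∂(geomMeasure p) = ∑' k : ℕ, W p k * f (k+1) := by
  rw [geomMeasure, lintegral_sum_measure]
  simp only [lintegral_smul_measure, lintegral_dirac, W, smul_eq_mul]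

lemma geom_prob (hp0 : 0 < p) (hp1 : p < 1) : IsProbabilityMeasure (geomMeasure p) := by
  constructor
  have := lintegral_geom p (fun _ => 1)
  simp only [lintegral_one, mul_one] at this
  rw [this, E0 hp0 hp1]

lemma Emean (hp0 : 0 < p) (hp1 : p < 1) :
    ∑' k : ℕ, W p k * ENNReal.ofReal ((k+1 : ℕ):ℝ) = ENNReal.ofReal (1/p) := by
  have h : ∀ k : ℕ, W p k * ENNReal.ofReal ((k+1 : ℕ):ℝ)
      = ENNReal.ofReal (p*(1-p)^k*(k:ℝ) + p*(1-p)^k) := by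
    intro k
    rw [W, ← ENNReal.ofReal_mul (hW hp0 hp1 k)]
    congr 1
    push_cast
    ring
  simp_rw [h]
  rw [← ENNReal.ofReal_tsum_of_nonneg
    (fun k => add_nonneg (mul_nonneg (hW hp0 hp1 k) (Nat.cast_nonneg k)) (hW hp0 hp1 k))
    ((rsummable1 hp0 hp1).add (rsummable0 hp0 hp1)),
    Summable.tsum_add (rsummable1 hp0 hp1) (rsummable0 hp0 hp1), rsum1 hp0 hp1, rsum0 hp0 hp1]
  congr 1
  field_simp
  ring

theorem mean_perimeter_geometric
    {Ω : Type*} [MeasurableSpace Ω] (μ : Measure Ω) [IsProbabilityMeasure μ]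
    (p : ℝ) (hp : p ∈ Set.Ioo (0 : ℝ) 1) (n : ℕ) (hn : 2 ≤ n) (x : ℕ → Ω → ℕ)
    (hmeas : ∀ i, i < n → Measurable (x i))
    (hdist : ∀ i, i < n → Measure.map (x i) μ = geomMeasure p)
    (hindep : iIndepFun (fun i : Fin n => x i) μ) :
    ∫ ω, ((2 * n : ℝ) + (x 0 ω : ℝ) + (x (n - 1) ω : ℝ)
        + ∑ i ∈ Finset.Icc 1 (n - 1), |(x i ω : ℝ) - (x (i - 1) ω : ℝ)|) ∂μ
      = (2 + (2 + 2 * p - 2 * p ^ 2) * (n : ℝ)) / (p * (2 - p)) := by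
  obtain ⟨hp0, hp1⟩ := hp
  have h0n : 0 < n := by omega
  have hn1 : n - 1 < n := by omega
  haveI : IsProbabilityMeasure (geomMeasure p) := geom_prob hp0 hp1
  have hxR : ∀ i, i < n → Measurable (fun ω => ((x i ω : ℕ) : ℝ)) :=
    fun i h => (measurable_of_countable _).comp (hmeas i h)
  have hbb : ∀ i ∈ Finset.Icc 1 (n-1), 1 ≤ i ∧ i < n ∧ i - 1 < n := by
    intro i hi
    rw [Finset.mem_Icc] at hi
    omega
  -- measurability of the integrand
  have hfm : Measurable (fun ω => (2 * n : ℝ) + (x 0 ω : ℝ) + (x (n - 1) ω : ℝ)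
      + ∑ i ∈ Finset.Icc 1 (n - 1), |(x i ω : ℝ) - (x (i - 1) ω : ℝ)|) := by
    apply Measurable.add
    · exact (measurable_const.add (hxR 0 h0n)).add (hxR (n-1) hn1)
    · exact Finset.measurable_sum _ (fun i hi =>
        ((hxR i (hbb i hi).2.1).sub (hxR (i-1) (hbb i hi).2.2)).abs)
  have hnn : ∀ ω, 0 ≤ (2 * n : ℝ) + (x 0 ω : ℝ) + (x (n - 1) ω : ℝ)
      + ∑ i ∈ Finset.Icc 1 (n - 1), |(x i ω : ℝ) - (x (i - 1) ω : ℝ)| := by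
    intro ω
    have h1 : (0:ℝ) ≤ (2 * n : ℝ) + (x 0 ω : ℝ) + (x (n - 1) ω : ℝ) := by positivity
    have h2 : (0:ℝ) ≤ ∑ i ∈ Finset.Icc 1 (n - 1), |(x i ω : ℝ) - (x (i - 1) ω : ℝ)| :=
      Finset.sum_nonneg (fun i _ => abs_nonneg _)
    linarith
  rw [integral_eq_lintegral_of_nonneg_ae (Filter.Eventually.of_forall hnn)
    hfm.aestronglyMeasurable]
  -- decompose ofReal of the sum
  have hof : ∀ ω, ENNReal.ofReal ((2 * n : ℝ) + (x 0 ω : ℝ) + (x (n - 1) ω : ℝ)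
      + ∑ i ∈ Finset.Icc 1 (n - 1), |(x i ω : ℝ) - (x (i - 1) ω : ℝ)|)
      = ENNReal.ofReal (2 * n : ℝ) + ENNReal.ofReal (x 0 ω : ℝ)
        + ENNReal.ofReal (x (n - 1) ω : ℝ)
        + ∑ i ∈ Finset.Icc 1 (n - 1), ENNReal.ofReal |(x i ω : ℝ) - (x (i - 1) ω : ℝ)| := by
    intro ω
    rw [ENNReal.ofReal_add (by positivity)
      (Finset.sum_nonneg (fun i _ => abs_nonneg _)),
      ENNReal.ofReal_add (by positivity) (Nat.cast_nonneg _),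
      ENNReal.ofReal_add (by positivity) (Nat.cast_nonneg _),
      ENNReal.ofReal_sum_of_nonneg (fun i _ => abs_nonneg _)]
  simp_rw [hof]
  -- split the lintegral
  have m1 : Measurable (fun ω => ENNReal.ofReal ((x 0 ω : ℕ) : ℝ)) :=
    ENNReal.measurable_ofReal.comp (hxR 0 h0n)
  have m2 : Measurable (fun ω => ENNReal.ofReal ((x (n-1) ω : ℕ) : ℝ)) :=
    ENNReal.measurable_ofReal.comp (hxR (n-1) hn1)
  have mS : Measurable (fun ω => ∑ i ∈ Finset.Icc 1 (n - 1),
      ENNReal.ofReal |(x i ω : ℝ) - (x (i - 1) ω : ℝ)|) :=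
    Finset.measurable_sum _ (fun i hi => ENNReal.measurable_ofReal.comp
      ((hxR i (hbb i hi).2.1).sub (hxR (i-1) (hbb i hi).2.2)).abs)
  rw [lintegral_add_right _ mS, lintegral_add_right _ m2, lintegral_add_right _ m1,
    lintegral_const, measure_univ, mul_one]
  -- single means
  have hmean : ∀ i, i < n →
      ∫⁻ ω, ENNReal.ofReal ((x i ω : ℕ) : ℝ) ∂μ = ENNReal.ofReal (1/p) := by
    intro i h
    calc ∫⁻ ω, ENNReal.ofReal ((x i ω : ℕ) : ℝ) ∂μ
        = ∫⁻ a, ENNReal.ofReal ((a : ℕ) : ℝ) ∂(μ.map (x i)) :=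
          (lintegral_map (f := fun a : ℕ => ENNReal.ofReal ((a:ℕ):ℝ))
            (measurable_of_countable _) (hmeas i h)).symm
      _ = ∑' k, W p k * ENNReal.ofReal ((k+1 : ℕ):ℝ) := by
          rw [hdist i h, lintegral_geom]
      _ = ENNReal.ofReal (1/p) := Emean hp0 hp1
  -- pair means
  have hpair : ∀ i ∈ Finset.Icc 1 (n-1),
      ∫⁻ ω, ENNReal.ofReal |(x i ω : ℝ) - (x (i - 1) ω : ℝ)| ∂μ
        = ENNReal.ofReal (2*(1-p)/(p*(2-p))) := by
    intro i hi
    obtain ⟨h1i, hin, hjn⟩ := hbb i hi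
    have hne : (⟨i, hin⟩ : Fin n) ≠ ⟨i-1, hjn⟩ := by
      simp only [ne_eq, Fin.mk.injEq]
      omega
    have hIF : IndepFun (x i) (x (i-1)) μ := hindep.indepFun hne
    have hmap : μ.map (fun ω => (x i ω, x (i-1) ω))
        = (geomMeasure p).prod (geomMeasure p) := by
      rw [(indepFun_iff_map_prod_eq_prod_map_map (hmeas i hin).aemeasurable
        (hmeas (i-1) hjn).aemeasurable).mp hIF, hdist i hin, hdist (i-1) hjn]
    have habs : ∀ k l : ℕ, |((k+1 : ℕ):ℝ) - ((l+1 : ℕ):ℝ)| = |(k:ℝ) - (l:ℝ)| := by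
      intro k l
      push_cast
      ring_nf
    calc ∫⁻ ω, ENNReal.ofReal |(x i ω : ℝ) - (x (i - 1) ω : ℝ)| ∂μ
        = ∫⁻ z : ℕ × ℕ, ENNReal.ofReal |(z.1 : ℝ) - (z.2 : ℝ)|
            ∂((geomMeasure p).prod (geomMeasure p)) := by
          rw [← hmap, lintegral_map (f := fun z : ℕ × ℕ => ENNReal.ofReal |(z.1 : ℝ) - (z.2 : ℝ)|)
            (measurable_of_countable _) ((hmeas i hin).prodMk (hmeas (i-1) hjn))]
      _ = ∑' k : ℕ, ∑' l : ℕ, W p k * (W p l * ENNReal.ofReal |(k:ℝ) - (l:ℝ)|) := by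
          rw [lintegral_prod _ (measurable_of_countable _).aemeasurable, lintegral_geom]
          congr 1; funext k
          rw [lintegral_geom, ← ENNReal.tsum_mul_left]
          congr 1; funext l
          rw [habs k l]
      _ = ENNReal.ofReal (2*(1-p)/(p*(2-p))) := ED hp0 hp1
  have mT : ∀ i ∈ Finset.Icc 1 (n-1),
      Measurable (fun ω => ENNReal.ofReal |(x i ω : ℝ) - (x (i - 1) ω : ℝ)|) :=
    fun i hi => ENNReal.measurable_ofReal.comp
      ((hxR i (hbb i hi).2.1).sub (hxR (i-1) (hbb i hi).2.2)).abs
  rw [hmean 0 h0n, hmean (n-1) hn1, lintegral_finset_sum _ mT,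
    Finset.sum_congr rfl hpair, Finset.sum_const, Nat.card_Icc]
  -- final arithmetic
  have hcard : n - 1 + 1 - 1 = n - 1 := by omega
  rw [hcard, nsmul_eq_mul, ← ENNReal.ofReal_natCast (n-1),
    ← ENNReal.ofReal_mul (Nat.cast_nonneg _),
    ← ENNReal.ofReal_add (by positivity) (by positivity),
    ← ENNReal.ofReal_add (by positivity) (by positivity),
    ← ENNReal.ofReal_add (by positivity) ?_]
  · rw [ENNReal.toReal_ofReal ?_]
    · have hc : ((n-1 : ℕ) : ℝ) = (n:ℝ) - 1 := by
        rw [Nat.cast_sub (by omega)]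
        norm_num
      rw [hc]
      have hd : (0:ℝ) < p*(2-p) := by nlinarith
      have h2p : (2:ℝ) - p ≠ 0 := (by linarith : (0:ℝ) < 2 - p).ne'
      field_simp
      ring
    · have hd : (0:ℝ) < p*(2-p) := by nlinarith
      have := div_nonneg (show (0:ℝ) ≤ 2*(1-p) by linarith) hd.le
      positivity
  · have hd : (0:ℝ) < p*(2-p) := by nlinarith
    have := div_nonneg (show (0:ℝ) ≤ 2*(1-p) by linarith) hd.le
    positivity
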